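/- arXiv:2104.07477 — 3 statements merged into one kernel-verified Lean document; each statement's English description precedes it below -/
import Mathlib

section
/- Lorentzian centroid theorem: given points h_1, ..., h_m ∈ H^{d,β} and weights w_1,...,w_m > 0, the point c = √β · (Σ_j w_j h_j)/|‖Σ_j w_j h_j‖_L| is the unique minimizer over c' ∈ H^{d,β} of the weighted sum of squared Lorentzian distances Σ_j w_j d_L²(h_j, c'), where d_L²(x,y) = -2β - 2⟨x,y⟩_L. -/
noncomputable section
open Finset

/-- Lorentzian scalar product on ℝ^{n+1}. -/
def lprod {n : ℕ} (x y : Fin (n + 1) → ℝ) : ℝ :=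
  -(x 0 * y 0) + ∑ i : Fin n, x i.succ * y i.succ

/-- The hyperboloid H^{n,β}. -/
def onH {n : ℕ} (β : ℝ) (x : Fin (n + 1) → ℝ) : Prop :=
  lprod x x = -β ∧ 0 < x 0

/-- The origin (√β, 0, …, 0) of the hyperboloid. -/
def orig (n : ℕ) (β : ℝ) : Fin (n + 1) → ℝ :=
  Fin.cons (Real.sqrt β) (fun _ => 0)

/-- Lorentzian norm. -/
def lnorm {n : ℕ} (v : Fin (n + 1) → ℝ) : ℝ := Real.sqrt (lprod v v)

/-- Euclidean norm of a vector in ℝ^n. -/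
def enorm {n : ℕ} (v : Fin n → ℝ) : ℝ := Real.sqrt (∑ i : Fin n, (v i) ^ 2)

/-- Exponential map at the origin of the hyperboloid. -/
def expO {n : ℕ} (β : ℝ) (v : Fin (n + 1) → ℝ) : Fin (n + 1) → ℝ :=
  fun i => Real.cosh (lnorm v / Real.sqrt β) * orig n β i
    + Real.sqrt β * Real.sinh (lnorm v / Real.sqrt β) * (v i / lnorm v)

/-- Inverse hyperbolic cosine. -/
def arcosh (x : ℝ) : ℝ := Real.log (x + Real.sqrt (x ^ 2 - 1))

/-- Intrinsic distance on the hyperboloid. -/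
def dH {n : ℕ} (β : ℝ) (x y : Fin (n + 1) → ℝ) : ℝ :=
  Real.sqrt β * arcosh (-(lprod x y) / β)

/-- Logarithmic map at the origin of the hyperboloid. -/
def logO {n : ℕ} (β : ℝ) (x : Fin (n + 1) → ℝ) : Fin (n + 1) → ℝ :=
  fun i => dH β (orig n β) x *
    ((x i + (1 / β) * lprod (orig n β) x * orig n β i) /
      lnorm (fun j => x j + (1 / β) * lprod (orig n β) x * orig n β j))

/-- Squared Lorentzian distance. -/
def dL2 {n : ℕ} (β : ℝ) (x y : Fin (n + 1) → ℝ) : ℝ := -2 * β - 2 * lprod x y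

lemma lprod_comm {n : ℕ} (x y : Fin (n + 1) → ℝ) : lprod x y = lprod y x := by
  unfold lprod; congr 1
  · ring
  · exact Finset.sum_congr rfl fun i _ => by ring
lemma lprod_smul_left {n : ℕ} (t : ℝ) (x y : Fin (n + 1) → ℝ) :
    lprod (fun i => t * x i) y = t * lprod x y := by
  unfold lprod
  rw [mul_add, Finset.mul_sum]
  congr 1
  · ring
  · exact Finset.sum_congr rfl fun i _ => by ring
lemma lprod_sum_left {n m : ℕ} (w : Fin m → ℝ) (h : Fin m → Fin (n + 1) → ℝ)
    (y : Fin (n + 1) → ℝ) :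
    lprod (∑ j : Fin m, w j • h j) y = ∑ j : Fin m, w j * lprod (h j) y := by
  unfold lprod
  simp only [Finset.sum_apply, Pi.smul_apply, smul_eq_mul, mul_add, Finset.mul_sum]
  rw [Finset.sum_add_distrib, Finset.sum_comm, Finset.sum_mul]
  congr 1
  · rw [← Finset.sum_neg_distrib]
    exact Finset.sum_congr rfl fun j _ => by ring
  · exact Finset.sum_congr rfl fun i _ => by
      rw [Finset.sum_mul]; exact Finset.sum_congr rfl fun j _ => by ring
lemma lprod_le_neg_beta {n : ℕ} {β : ℝ} (hβ : 0 < β) {x y : Fin (n + 1) → ℝ}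
    (hx : onH β x) (hy : onH β y) :
    lprod x y ≤ -β ∧ (lprod x y = -β → x = y) := by
  obtain ⟨hx1, hx0⟩ := hx
  obtain ⟨hy1, hy0⟩ := hy
  set A := ∑ i : Fin n, x i.succ * x i.succ with hA
  set B := ∑ i : Fin n, y i.succ * y i.succ with hB
  set D := ∑ i : Fin n, x i.succ * y i.succ with hD
  have hxA : x 0 * x 0 = β + A := by unfold lprod at hx1; linarith
  have hyB : y 0 * y 0 = β + B := by unfold lprod at hy1; linarith
  have hCS : D ^ 2 ≤ A * B := by
    have := Finset.sum_mul_sq_le_sq_mul_sq Finset.univ (fun i : Fin n => x i.succ)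
      (fun i : Fin n => y i.succ)
    simpa [← hD, ← hA, ← hB, sq] using this
  have hsub : A + B - 2 * D = ∑ i : Fin n, (x i.succ - y i.succ) ^ 2 := by
    rw [hA, hB, hD, Finset.mul_sum, ← Finset.sum_add_distrib, ← Finset.sum_sub_distrib]
    exact Finset.sum_congr rfl fun i _ => by ring
  have hAB : 0 ≤ A + B - 2 * D := hsub ▸ Finset.sum_nonneg fun i _ => sq_nonneg _
  have hkey : β + D ≤ x 0 * y 0 := by
    nlinarith [mul_pos hx0 hy0, sq_nonneg (x 0 * y 0 + β + D), sq_nonneg (x 0 * y 0 - β - D)]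
  have hle : lprod x y ≤ -β := by unfold lprod; rw [← hD]; linarith
  refine ⟨hle, fun heq => ?_⟩
  have heq' : x 0 * y 0 = β + D := by unfold lprod at heq; rw [← hD] at heq; linarith
  have hsum0 : A + B - 2 * D = 0 := by nlinarith
  have hzero : ∀ i ∈ Finset.univ, (fun i : Fin n => (x i.succ - y i.succ) ^ 2) i = 0 := by
    rw [← Finset.sum_eq_zero_iff_of_nonneg fun i _ => sq_nonneg _]
    rw [← hsub]; linarith
  have hspace : ∀ i : Fin n, x i.succ = y i.succ := fun i => by
    have := hzero i (Finset.mem_univ i)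
    have := pow_eq_zero_iff (n := 2) (by norm_num) |>.mp this
    linarith
  have hAeqB : A = B := by
    rw [hA, hB]; exact Finset.sum_congr rfl fun i _ => by rw [hspace i]
  have h00 : x 0 = y 0 := by
    have : x 0 * x 0 = y 0 * y 0 := by rw [hxA, hyB, hAeqB]
    nlinarith
  funext i
  exact Fin.cases h00 (fun i => hspace i) i

theorem lorentzian_centroid {d m : ℕ} {β : ℝ} (hβ : 0 < β) (hm : 0 < m)
    (h : Fin m → Fin (d + 1) → ℝ) (w : Fin m → ℝ)
    (hh : ∀ j, onH β (h j)) (hw : ∀ j, 0 < w j) :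
    let s : Fin (d + 1) → ℝ := ∑ j : Fin m, w j • h j
    let c : Fin (d + 1) → ℝ := fun i => Real.sqrt β * s i / Real.sqrt (-(lprod s s))
    onH β c ∧
    ∀ c' : Fin (d + 1) → ℝ, onH β c' → c' ≠ c →
      (∑ j : Fin m, w j * dL2 β (h j) c) < ∑ j : Fin m, w j * dL2 β (h j) c' := by
  intro s c
  have hne : (Finset.univ : Finset (Fin m)).Nonempty := by
    simpa [Finset.univ_nonempty_iff] using Fin.pos_iff_nonempty.mp hm
  have hW : 0 < ∑ j : Fin m, w j := Finset.sum_pos (fun j _ => hw j) hne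
  set W := ∑ j : Fin m, w j with hWdef
  -- s is timelike
  have hjk : ∀ j k, lprod (h j) (h k) ≤ -β := fun j k => (lprod_le_neg_beta hβ (hh j) (hh k)).1
  have hjs : ∀ j, lprod (h j) s ≤ -β * W := by
    intro j
    have : lprod s (h j) = ∑ k : Fin m, w k * lprod (h k) (h j) := lprod_sum_left w h (h j)
    rw [lprod_comm, this, hWdef, neg_mul, Finset.mul_sum, ← Finset.sum_neg_distrib]
    refine Finset.sum_le_sum fun k _ => ?_
    have := hjk k j
    nlinarith [hw k]
  have hss : lprod s s < 0 := by
    have h1 : lprod s s = ∑ j : Fin m, w j * lprod (h j) s := lprod_sum_left w h s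
    have h2 : ∑ j : Fin m, w j * lprod (h j) s ≤ ∑ j : Fin m, w j * (-β * W) :=
      Finset.sum_le_sum fun j _ => mul_le_mul_of_nonneg_left (hjs j) (hw j).le
    rw [← Finset.sum_mul, ← hWdef] at h2
    have h3 : W * (-β * W) < 0 := by nlinarith [mul_pos (mul_pos hβ hW) hW]
    linarith
  have hsdef : s = ∑ j : Fin m, w j • h j := rfl
  have hLpos : 0 < -(lprod s s) := neg_pos.mpr hss
  set t := Real.sqrt β / Real.sqrt (-(lprod s s)) with ht
  have htpos : 0 < t := div_pos (Real.sqrt_pos.mpr hβ) (Real.sqrt_pos.mpr hLpos)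
  have hceq : c = fun i => t * s i := by
    funext i
    show Real.sqrt β * s i / Real.sqrt (-(lprod s s)) = t * s i
    rw [ht]; ring
  have ht2 : t * t = β / (-(lprod s s)) := by
    rw [ht, div_mul_div_comm, Real.mul_self_sqrt hβ.le, Real.mul_self_sqrt hLpos.le]
  have hcc : lprod c c = -β := by
    rw [hceq, lprod_smul_left, lprod_comm, lprod_smul_left, ← mul_assoc, ht2]
    field_simp
    rw [div_self hss.ne]
  have hs0 : 0 < s 0 := by
    have hs0' : s 0 = ∑ j : Fin m, w j * h j 0 := by
      rw [hsdef]; simp [Finset.sum_apply]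
    rw [hs0']
    exact Finset.sum_pos (fun j _ => mul_pos (hw j) (hh j).2) hne
  have hc0 : 0 < c 0 := by
    have := mul_pos htpos hs0
    rw [hceq]; exact this
  have hconH : onH β c := ⟨hcc, hc0⟩
  refine ⟨hconH, fun c' hc' hnec => ?_⟩
  -- strict inequality of Lorentz products
  have h1 : lprod c c' ≤ -β := (lprod_le_neg_beta hβ hconH hc').1
  have h2 : lprod c c' ≠ -β := fun he =>
    hnec ((lprod_le_neg_beta hβ hconH hc').2 he).symm
  have h3 : lprod c c' < -β := lt_of_le_of_ne h1 h2
  have h4 : lprod c c' = t * lprod s c' := by rw [hceq, lprod_smul_left]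
  have h5 : t * lprod s c = -β := by
    rw [← lprod_smul_left t s c, ← hceq]; exact hcc
  have hlt : lprod s c' < lprod s c := by
    have h6 : t * lprod s c' < t * lprod s c := by rw [h5, ← h4]; exact h3
    exact (mul_lt_mul_iff_right₀ htpos).mp h6
  -- rewrite the weighted sums
  have hsum : ∀ y : Fin (d + 1) → ℝ,
      ∑ j : Fin m, w j * dL2 β (h j) y = -2 * β * W - 2 * lprod s y := by
    intro y
    have he : ∀ j : Fin m, w j * dL2 β (h j) y
        = w j * (-2 * β) - 2 * (w j * lprod (h j) y) := fun j => by
      unfold dL2; ring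
    simp_rw [he]
    rw [Finset.sum_sub_distrib, ← Finset.sum_mul, ← Finset.mul_sum,
      ← lprod_sum_left w h y, ← hsdef, ← hWdef]
    ring
  rw [hsum c, hsum c']
  linarith
end
end

section
/- Equivalence of matrix-vector multiplications (Theorem 3.1): let α = 1/β, let p: H^{n,β} → D^{n,α} be the diffeomorphism p(x_0, x̂) = √β x̂/(√β + x_0), and let M be an m×n real matrix. Then for every x ∈ H^{n,β} with x ≠ (√β,0,...,0) and M x̂ ≠ 0, p(M ⊗^β x) = M ⊗^α p(x), where M ⊗^β x is the Lorentzian matrix-vector multiplication and M ⊗^α y := (1/√α) tanh((‖My‖/‖y‖) tanh⁻¹(√α‖y‖)) · My/‖My‖ is the Möbius matrix-vector multiplication. -/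
noncomputable section
open Finset

/-- Euclidean norm of a vector in ℝ^n. -/
def euclNorm {n : ℕ} (v : Fin n → ℝ) : ℝ := Real.sqrt (∑ i : Fin n, (v i) ^ 2)

/-- Inverse hyperbolic tangent. -/
def artanh (x : ℝ) : ℝ := Real.log ((1 + x) / (1 - x)) / 2

/-- Lorentzian matrix-vector multiplication M ⊗^β x. -/
def lmul {n m : ℕ} (β : ℝ) (M : Matrix (Fin m) (Fin n) ℝ)
    (x : Fin (n + 1) → ℝ) : Fin (m + 1) → ℝ :=
  expO β (Fin.cons 0 (M.mulVec (Fin.tail (logO β x))))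

/-- Möbius matrix-vector multiplication M ⊗^α y on the Poincaré ball. -/
def mmul {n m : ℕ} (α : ℝ) (M : Matrix (Fin m) (Fin n) ℝ)
    (y : Fin n → ℝ) : Fin m → ℝ :=
  fun i => (1 / Real.sqrt α) *
    Real.tanh ((euclNorm (M.mulVec y) / euclNorm y) * artanh (Real.sqrt α * euclNorm y)) *
    (M.mulVec y i / euclNorm (M.mulVec y))

/-- Projection from the hyperboloid to the Poincaré ball. -/
def toBall {n : ℕ} (β : ℝ) (x : Fin (n + 1) → ℝ) : Fin n → ℝ :=
  fun i => Real.sqrt β * x i.succ / (Real.sqrt β + x 0)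

lemma euclNorm_nonneg' {n : ℕ} (v : Fin n → ℝ) : 0 ≤ euclNorm v := Real.sqrt_nonneg _

lemma euclNorm_sq' {n : ℕ} (v : Fin n → ℝ) : euclNorm v ^ 2 = ∑ i : Fin n, v i ^ 2 :=
  Real.sq_sqrt (Finset.sum_nonneg fun _ _ => sq_nonneg _)

lemma euclNorm_smul' {n : ℕ} (k : ℝ) (hk : 0 ≤ k) (v : Fin n → ℝ) :
    euclNorm (fun i => k * v i) = k * euclNorm v := by
  unfold euclNorm
  have h1 : ∑ i : Fin n, (k * v i) ^ 2 = k ^ 2 * ∑ i : Fin n, v i ^ 2 := by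
    rw [Finset.mul_sum]
    exact Finset.sum_congr rfl fun i _ => by ring
  rw [h1, Real.sqrt_mul (sq_nonneg k), Real.sqrt_sq hk]

lemma euclNorm_pos' {n : ℕ} {v : Fin n → ℝ} (hv : v ≠ 0) : 0 < euclNorm v := by
  rcases (euclNorm_nonneg' v).lt_or_eq with h | h
  · exact h
  · exfalso
    apply hv
    have h0 : ∑ i : Fin n, v i ^ 2 = 0 := by
      have h2 := euclNorm_sq' v
      rw [← h] at h2
      simpa using h2.symm
    funext i
    have := (Finset.sum_eq_zero_iff_of_nonneg (fun i _ => sq_nonneg (v i))).mp h0 i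
      (Finset.mem_univ i)
    exact pow_eq_zero_iff two_ne_zero |>.mp this

lemma arcosh_eq' (s a c : ℝ) (hs : 0 < s) (ha : 0 ≤ a) (hc : c ^ 2 = s ^ 2 + a ^ 2) :
    arcosh (c / s) = Real.log ((c + a) / s) := by
  unfold arcosh
  congr 1
  have h1 : (c / s) ^ 2 - 1 = (a / s) ^ 2 := by
    field_simp
    linarith
  rw [h1, Real.sqrt_sq (by positivity)]
  field_simp

lemma artanh_eq' (s a c : ℝ) (hs : 0 < s) (ha : 0 < a) (hc : c ^ 2 = s ^ 2 + a ^ 2)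
    (hc0 : 0 < c) :
    artanh (a / (s + c)) = Real.log ((c + a) / s) / 2 := by
  have hca : a < c := by nlinarith
  have hsc : (0:ℝ) < s + c := by linarith
  unfold artanh
  have h1 : (1 + a / (s + c)) / (1 - a / (s + c)) = (c + a) / s := by
    rw [div_eq_div_iff]
    · field_simp
      ring_nf
      nlinarith [hc]
    · have h5 : 1 - a / (s + c) = (s + c - a) / (s + c) := by field_simp
      rw [h5]
      exact (div_pos (show (0:ℝ) < s + c - a by linarith) hsc).ne'
    · exact hs.ne'
  rw [h1]

lemma half_tanh' (s q θ : ℝ) (hs : 0 < s) :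
    s * (s * Real.sinh (2 * θ) * q) / (s + s * Real.cosh (2 * θ)) = s * Real.tanh θ * q := by
  rw [Real.sinh_two_mul, Real.cosh_two_mul, Real.tanh_eq_sinh_div_cosh]
  have hch : (0:ℝ) < Real.cosh θ := Real.cosh_pos θ
  have hsq : Real.sinh θ ^ 2 = Real.cosh θ ^ 2 - 1 := by
    have h6 := Real.cosh_sq_sub_sinh_sq θ
    linarith
  rw [hsq]
  have hden : (0:ℝ) < s + s * (Real.cosh θ ^ 2 + (Real.cosh θ ^ 2 - 1)) := by
    nlinarith [mul_pos hs (mul_pos hch hch)]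
  rw [div_eq_iff hden.ne']
  field_simp
  ring

theorem lmul_equiv_mmul {n m : ℕ} {β α : ℝ} (hβ : 0 < β) (hα : α = 1 / β)
    (M : Matrix (Fin m) (Fin n) ℝ)
    {x : Fin (n + 1) → ℝ} (hx : onH β x) (hx0 : x ≠ orig n β)
    (hM : M.mulVec (Fin.tail x) ≠ 0) :
    toBall β (lmul β M x) = mmul α M (toBall β x) := by
  have hs : 0 < Real.sqrt β := Real.sqrt_pos.mpr hβ
  set s := Real.sqrt β with hsdef
  have hs2 : s ^ 2 = β := Real.sq_sqrt hβ.le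
  set c := x 0 with hcdef
  have hc0 : 0 < c := hx.2
  set a := euclNorm (Fin.tail x) with hadef
  have ha : 0 ≤ a := euclNorm_nonneg' _
  have haS : a ^ 2 = ∑ i : Fin n, x i.succ ^ 2 := euclNorm_sq' (Fin.tail x)
  have hxx : -(c * c) + ∑ i : Fin n, x i.succ * x i.succ = -β := hx.1
  have hsum : ∑ i : Fin n, x i.succ ^ 2 = c ^ 2 - β := by
    have h2 : ∑ i : Fin n, x i.succ * x i.succ = ∑ i : Fin n, x i.succ ^ 2 :=
      Finset.sum_congr rfl fun i _ => (sq (x i.succ)).symm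
    rw [h2] at hxx
    nlinarith [hxx]
  have hc2 : c ^ 2 = s ^ 2 + a ^ 2 := by
    rw [haS, hsum, hs2]; ring
  have ha0 : 0 < a := by
    rcases ha.lt_or_eq with h | h
    · exact h
    · exfalso
      apply hx0
      have ha' : a = 0 := h.symm
      have hS0 : ∑ i : Fin n, x i.succ ^ 2 = 0 := by rw [← haS, ha']; norm_num
      have hcs : c = s := by
        have h2 : (c - s) * (c + s) = 0 := by nlinarith [hc2, ha']
        rcases mul_eq_zero.mp h2 with h3 | h3
        · linarith
        · linarith
      funext j
      refine Fin.cases ?_ (fun i => ?_) j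
      · show x 0 = orig n β 0
        simp only [orig, Fin.cons_zero, ← hsdef, ← hcdef]
        exact hcs
      · show x i.succ = orig n β i.succ
        simp only [orig, Fin.cons_succ]
        have := (Finset.sum_eq_zero_iff_of_nonneg
          (fun i _ => sq_nonneg (x i.succ))).mp hS0 i (Finset.mem_univ i)
        exact pow_eq_zero_iff two_ne_zero |>.mp this
  have hca : a < c := by nlinarith
  have hcs : s < c := by nlinarith
  -- lprod of orig and x
  have hlo : lprod (orig n β) x = -(s * c) := by
    unfold lprod orig
    simp [Fin.cons_zero, Fin.cons_succ, ← hsdef, ← hcdef]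
  -- the vector inside logO
  have hu : (fun j => x j + 1 / β * lprod (orig n β) x * orig n β j)
      = (Fin.cons 0 (Fin.tail x) : Fin (n+1) → ℝ) := by
    funext j
    refine Fin.cases ?_ (fun i => ?_) j
    · have ho0 : orig n β 0 = s := by simp [orig, ← hsdef]
      rw [Fin.cons_zero, ho0, hlo, ← hcdef, ← hs2]
      field_simp
      ring
    · simp [orig, Fin.cons_succ, Fin.tail]
  have hlnu : lnorm (Fin.cons 0 (Fin.tail x) : Fin (n+1) → ℝ) = a := by
    have h1 : lprod (Fin.cons 0 (Fin.tail x) : Fin (n+1) → ℝ)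
        (Fin.cons 0 (Fin.tail x)) = a ^ 2 := by
      unfold lprod
      simp only [Fin.cons_zero, Fin.cons_succ, Fin.tail]
      rw [haS]
      simp [pow_two]
    unfold lnorm
    rw [h1, Real.sqrt_sq ha]
  set r := s * arcosh (c / s) with hrdef
  have hr : 0 < r := by
    apply mul_pos hs
    unfold arcosh
    apply Real.log_pos
    have h1 : 1 < c / s := (one_lt_div hs).mpr hcs
    nlinarith [Real.sqrt_nonneg ((c / s) ^ 2 - 1)]
  have hdH : dH β (orig n β) x = r := by
    unfold dH
    rw [hlo, ← hsdef, hrdef]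
    congr 2
    rw [← hs2]
    field_simp
  have hlog : ∀ i : Fin n, logO β x i.succ = r / a * x i.succ := by
    intro i
    unfold logO
    rw [hdH]
    have h2 := congrFun hu i.succ
    simp only [Fin.cons_succ, Fin.tail] at h2
    rw [hu, hlnu, h2]
    ring
  set w := M.mulVec (Fin.tail x) with hwdef
  set b := euclNorm w with hbdef
  have hb0 : 0 < b := euclNorm_pos' hM
  have hMv : M.mulVec (Fin.tail (logO β x)) = fun j => r / a * w j := by
    funext j
    simp only [hwdef, Matrix.mulVec, dotProduct, Finset.mul_sum]
    refine Finset.sum_congr rfl fun k _ => ?_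
    simp only [Fin.tail]
    rw [hlog k]
    ring
  set t := r / a * b with htdef
  have ht0 : 0 < t := mul_pos (div_pos hr ha0) hb0
  have hwS : ∑ j : Fin m, w j ^ 2 = b ^ 2 := (euclNorm_sq' w).symm
  have hlnv : lnorm (Fin.cons 0 (fun j => r / a * w j) : Fin (m+1) → ℝ) = t := by
    have h1 : lprod (Fin.cons 0 (fun j => r / a * w j) : Fin (m+1) → ℝ)
        (Fin.cons 0 (fun j => r / a * w j)) = t ^ 2 := by
      unfold lprod
      simp only [Fin.cons_zero, Fin.cons_succ]
      have h2 : ∑ j : Fin m, r / a * w j * (r / a * w j) = (r / a) ^ 2 * ∑ j : Fin m, w j ^ 2 := by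
        rw [Finset.mul_sum]
        exact Finset.sum_congr rfl fun j _ => by ring
      rw [h2, hwS, htdef]
      ring
    unfold lnorm
    rw [h1, Real.sqrt_sq ht0.le]
  have hlmul : lmul β M x = Fin.cons (s * Real.cosh (t / s))
      (fun j => s * Real.sinh (t / s) * (w j / b)) := by
    unfold lmul
    rw [hMv]
    unfold expO
    rw [hlnv]
    funext j
    refine Fin.cases ?_ (fun i => ?_) j
    · simp only [orig, Fin.cons_zero, ← hsdef]
      rw [div_eq_mul_inv (0:ℝ)]
      ring
    · simp only [orig, Fin.cons_succ]
      rw [← hsdef]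
      have h3 : r / a * w i / t = w i / b := by
        rw [htdef]
        field_simp
      rw [h3]
      ring
  have hsc : (0:ℝ) < s + c := by linarith
  have hy : toBall β x = fun i => s / (s + c) * x i.succ := by
    funext i
    unfold toBall
    rw [← hsdef, ← hcdef]
    ring
  have hey : euclNorm (toBall β x) = s / (s + c) * a := by
    rw [hy, hadef]
    exact euclNorm_smul' _ (by positivity) (Fin.tail x)
  have hMy : M.mulVec (toBall β x) = fun j => s / (s + c) * w j := by
    funext j
    rw [hy]
    simp only [hwdef, Matrix.mulVec, dotProduct, Finset.mul_sum]
    refine Finset.sum_congr rfl fun k _ => ?_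
    simp only [Fin.tail]
    ring
  have heMy : euclNorm (M.mulVec (toBall β x)) = s / (s + c) * b := by
    rw [hMy, hbdef]
    exact euclNorm_smul' _ (by positivity) w
  have hsa : Real.sqrt α = 1 / s := by
    rw [hα, one_div, Real.sqrt_inv, ← hsdef, one_div]
  have hkey : t / s = 2 * (b / a * artanh (a / (s + c))) := by
    rw [artanh_eq' s a c hs ha0 hc2 hc0, htdef, hrdef, arcosh_eq' s a c hs ha hc2]
    field_simp
  funext j
  -- left side
  have hLHS : toBall β (lmul β M x) j
      = s * (s * Real.sinh (t / s) * (w j / b)) / (s + s * Real.cosh (t / s)) := by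
    unfold toBall
    rw [hlmul, ← hsdef]
    simp [Fin.cons_zero, Fin.cons_succ]
  -- right side
  have hRHS : mmul α M (toBall β x) j
      = s * Real.tanh (b / a * artanh (a / (s + c))) * (w j / b) := by
    unfold mmul
    rw [hey, heMy, hsa]
    have e1 : s / (s + c) * b / (s / (s + c) * a) = b / a := by
      rw [mul_div_mul_left _ _ (by positivity : s / (s + c) ≠ 0)]
    have e2 : 1 / s * (s / (s + c) * a) = a / (s + c) := by
      field_simp
    have e3 : M.mulVec (toBall β x) j / (s / (s + c) * b) = w j / b := by
      rw [hMy]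
      rw [mul_div_mul_left _ _ (by positivity : s / (s + c) ≠ 0)]
    rw [e1, e2, e3, one_div_one_div]
  rw [hLHS, hRHS, hkey, half_tanh' s (w j / b) (b / a * artanh (a / (s + c))) hs]
end
end

section
/- Equivalence of pointwise non-linear activation (Theorem 3.3) for LeakyReLU: let σ(t) = max(kt, t) with 0 < k < 1 applied coordinatewise, and α = 1/β. For x ∈ H^{n,β} (x ≠ origin), define σ^{⊗β}(x) = exp_0^β((0, σ(v̂))) where log_0^β(x) = (0,v̂), and for y ∈ D^{n,α} (y ≠ 0), σ^{⊗α}(y) = exp_0^α(σ(log_0^α(y))). Then p(σ^{⊗β}(x)) = σ^{⊗α}(p(x)), where p is the standard diffeomorphism from H^{n,β} to D^{n,α}. -/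
noncomputable section
open Finset

/-- Exponential map at the origin of the Poincaré ball. -/
def expD {n : ℕ} (α : ℝ) (v : Fin n → ℝ) : Fin n → ℝ :=
  fun i => Real.tanh (Real.sqrt α * _root_.enorm v) * (v i / (Real.sqrt α * _root_.enorm v))

/-- Logarithmic map at the origin of the Poincaré ball. -/
def logD {n : ℕ} (α : ℝ) (y : Fin n → ℝ) : Fin n → ℝ :=
  fun i => artanh (Real.sqrt α * _root_.enorm y) * (y i / (Real.sqrt α * _root_.enorm y))

/-- Coordinatewise LeakyReLU. -/
def leakyRelu {n : ℕ} (k : ℝ) (v : Fin n → ℝ) : Fin n → ℝ :=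
  fun i => max (k * v i) (v i)

/-- Lorentzian pointwise non-linear activation (for LeakyReLU). -/
def lact {n : ℕ} (β k : ℝ) (x : Fin (n + 1) → ℝ) : Fin (n + 1) → ℝ :=
  expO β (Fin.cons 0 (leakyRelu k (Fin.tail (logO β x))))

/-- Möbius pointwise non-linear activation (for LeakyReLU). -/
def mact {n : ℕ} (α k : ℝ) (y : Fin n → ℝ) : Fin n → ℝ :=
  expD α (leakyRelu k (logD α y))


private lemma tanh_half' (t : ℝ) :
    Real.sinh (2 * t) / (1 + Real.cosh (2 * t)) = Real.tanh t := by
  rw [Real.sinh_two_mul, Real.cosh_two_mul, Real.tanh_eq_sinh_div_cosh]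
  have h : Real.cosh t ≠ 0 := (Real.cosh_pos t).ne'
  rw [Real.sinh_sq]
  rw [show 1 + (Real.cosh t ^ 2 + (Real.cosh t ^ 2 - 1)) = 2 * Real.cosh t ^ 2 by ring]
  field_simp

private lemma arcosh_eq_two_artanh' {b s x0 : ℝ} (hb : 0 < b) (hs : 0 < s)
    (hx0 : b < x0) (h : x0 ^ 2 = b ^ 2 + s ^ 2) :
    arcosh (x0 / b) = 2 * artanh (s / (b + x0)) := by
  have hd : 0 < b + x0 := by linarith
  have hds : s < b + x0 := by nlinarith
  have h1 : (x0 / b) ^ 2 - 1 = (s / b) ^ 2 := by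
    field_simp
    linarith
  unfold arcosh artanh
  rw [h1, Real.sqrt_sq (by positivity)]
  rw [show 2 * (Real.log ((1 + s / (b + x0)) / (1 - s / (b + x0))) / 2)
      = Real.log ((1 + s / (b + x0)) / (1 - s / (b + x0))) by ring]
  congr 1
  have hne : 1 - s / (b + x0) ≠ 0 := by
    have : s / (b + x0) < 1 := (div_lt_one hd).2 hds
    linarith
  have hne2 : b + x0 - s ≠ 0 := by linarith
  field_simp [hne2]
  nlinarith [h]
set_option maxHeartbeats 1000000 in
theorem lact_equiv_mact {n : ℕ} {β α k : ℝ} (hβ : 0 < β) (hα : α = 1 / β)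
    (hk0 : 0 < k) (hk1 : k < 1)
    {x : Fin (n + 1) → ℝ} (hx : onH β x) (hx0 : x ≠ orig n β) :
    toBall β (lact β k x) = mact α k (toBall β x) := by
  obtain ⟨hxx, hx0pos⟩ := hx
  set b := Real.sqrt β with hbdef
  have hb : 0 < b := Real.sqrt_pos.2 hβ
  have hb2 : b ^ 2 = β := Real.sq_sqrt hβ.le
  set S := ∑ i : Fin n, x i.succ ^ 2 with hSdef
  have hS : S = x 0 ^ 2 - β := by
    unfold lprod at hxx
    have e : ∑ i : Fin n, x i.succ * x i.succ = S := by
      rw [hSdef]; exact Finset.sum_congr rfl fun i _ => (pow_two _).symm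
    nlinarith [hxx, e]
  have hex : ∃ i : Fin n, x i.succ ≠ 0 := by
    by_contra hc
    push_neg at hc
    apply hx0
    have hS0 : S = 0 := by simp [hSdef, hc]
    have hx0b : x 0 = b := by nlinarith
    funext j
    refine Fin.cases ?_ ?_ j
    · simpa [orig] using hx0b
    · intro i; simp [orig, hc i]
  obtain ⟨i₀, hi₀⟩ := hex
  have hSpos : 0 < S := by
    have h1 : (x i₀.succ) ^ 2 ≤ S := by
      rw [hSdef]
      exact Finset.single_le_sum (f := fun i => x i.succ ^ 2)
        (fun i _ => sq_nonneg _) (Finset.mem_univ i₀)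
    have h2 : 0 < x i₀.succ ^ 2 := by positivity
    linarith
  set s := Real.sqrt S with hsdef
  have hs : 0 < s := Real.sqrt_pos.2 hSpos
  have hs2 : s ^ 2 = S := Real.sq_sqrt hSpos.le
  have hx0sq : x 0 ^ 2 = b ^ 2 + s ^ 2 := by rw [hs2, hb2]; linarith
  have hbx0 : b < x 0 := by nlinarith
  have hd : 0 < b + x 0 := by linarith
  set w := leakyRelu k (Fin.tail x) with hwdef
  have hw : ∀ i, w i = max (k * x i.succ) (x i.succ) := fun i => rfl
  set R := ∑ i : Fin n, w i ^ 2 with hRdef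
  have hw0 : w i₀ ≠ 0 := by
    rw [hw]
    rcases hi₀.lt_or_gt with h | h
    · exact (max_lt (by nlinarith) h).ne
    · exact (lt_max_of_lt_right h).ne'
  have hRpos : 0 < R := by
    have h1 : (w i₀) ^ 2 ≤ R := by
      rw [hRdef]
      exact Finset.single_le_sum (f := fun i => w i ^ 2)
        (fun i _ => sq_nonneg _) (Finset.mem_univ i₀)
    have h2 : 0 < (w i₀) ^ 2 := by positivity
    linarith
  set r := Real.sqrt R with hrdef
  have hr : 0 < r := Real.sqrt_pos.2 hRpos
  have hr2 : r ^ 2 = R := Real.sq_sqrt hRpos.le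
  have hlo : lprod (orig n β) x = -(b * x 0) := by
    simp [lprod, orig, ← hbdef]
  set A := arcosh (x 0 / b) with hAdef
  have hApos : 0 < A := by
    rw [hAdef]; unfold arcosh
    apply Real.log_pos
    have h1 : 1 < x 0 / b := (one_lt_div hb).2 hbx0
    nlinarith [Real.sqrt_nonneg ((x 0 / b) ^ 2 - 1)]
  have hA2 : A = 2 * artanh (s / (b + x 0)) := arcosh_eq_two_artanh' hb hs hbx0 hx0sq
  have hdH : dH β (orig n β) x = b * A := by
    unfold dH
    rw [hlo, hAdef, ← hbdef]
    congr 1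
    rw [← hb2, pow_two, neg_neg, mul_div_mul_left _ _ hb.ne']
  -- the vector inside logO
  have hufun : (fun j => x j + 1 / β * lprod (orig n β) x * orig n β j)
      = Fin.cons 0 (Fin.tail x) := by
    funext j
    refine Fin.cases ?_ ?_ j
    · simp only [Fin.cons_zero]
      rw [hlo]
      simp only [orig, Fin.cons_zero, ← hbdef, ← hb2]
      field_simp
      simp only [Real.sqrt_sq hb.le]
      ring
    · intro i
      simp [orig, Fin.tail]
  have hlnu : lnorm (fun j => x j + 1 / β * lprod (orig n β) x * orig n β j) = s := by
    rw [hufun]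
    unfold lnorm lprod
    simp only [Fin.cons_zero, Fin.cons_succ, Fin.tail]
    rw [show ∑ i : Fin n, x i.succ * x i.succ = S by
      rw [hSdef]; exact Finset.sum_congr rfl fun i _ => (pow_two _).symm]
    rw [show -(0 * 0 : ℝ) + S = S by ring]
  have htail : Fin.tail (logO β x) = fun i => (b * A / s) * x i.succ := by
    funext i
    simp only [Fin.tail, logO]
    rw [hdH, hlnu]
    rw [show orig n β i.succ = 0 from rfl]
    ring
  set c := b * A / s with hcdef
  have hc : 0 < c := by rw [hcdef]; positivity
  have hlr : leakyRelu k (Fin.tail (logO β x)) = fun i => c * w i := by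
    rw [htail]
    funext i
    simp only [leakyRelu, hw]
    rw [show k * (c * x i.succ) = c * (k * x i.succ) by ring]
    exact (mul_max_of_nonneg _ _ hc.le).symm
  have hlv : lnorm (Fin.cons 0 (fun i => c * w i) : Fin (n+1) → ℝ) = c * r := by
    unfold lnorm lprod
    simp only [Fin.cons_zero, Fin.cons_succ]
    rw [show ∑ i : Fin n, c * w i * (c * w i) = c ^ 2 * R by
      rw [hRdef, Finset.mul_sum]; exact Finset.sum_congr rfl fun i _ => by ring]
    rw [show -(0 * 0 : ℝ) + c ^ 2 * R = (c * r) ^ 2 by rw [← hr2]; ring]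
    exact Real.sqrt_sq (by positivity)
  set T := A * r / s with hTdef
  have hT : lnorm (Fin.cons 0 (fun i => c * w i) : Fin (n+1) → ℝ) / Real.sqrt β = T := by
    rw [hlv, ← hbdef, hcdef, hTdef]
    field_simp
  have hE0 : lact β k x 0 = b * Real.cosh T := by
    simp only [lact, expO]
    rw [hlr, hT, hlv]
    simp only [orig, Fin.cons_zero, ← hbdef]
    rw [show (0:ℝ) / (c * r) = 0 by simp]
    ring
  have hEs : ∀ i : Fin n, lact β k x i.succ = b * Real.sinh T * (w i / r) := by
    intro i
    simp only [lact, expO]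
    rw [hlr, hT, hlv]
    simp only [orig, Fin.cons_succ, ← hbdef]
    rw [mul_div_mul_left _ _ hc.ne']
    ring
  -- Poincaré ball side
  have hsa : Real.sqrt α = 1 / b := by
    rw [hα, ← hb2, one_div, one_div, Real.sqrt_inv, Real.sqrt_sq hb.le]
  have heny : _root_.enorm (toBall β x) = b / (b + x 0) * s := by
    unfold _root_.enorm toBall
    simp only [← hbdef]
    rw [show ∑ i : Fin n, (b * x i.succ / (b + x 0)) ^ 2 = (b / (b + x 0)) ^ 2 * S by
      rw [hSdef, Finset.mul_sum]; exact Finset.sum_congr rfl fun i _ => by ring]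
    rw [show ((b / (b + x 0)) ^ 2 * S : ℝ) = (b / (b + x 0) * s) ^ 2 by rw [← hs2]; ring]
    exact Real.sqrt_sq (by positivity)
  have hμ : Real.sqrt α * _root_.enorm (toBall β x) = s / (b + x 0) := by
    rw [hsa, heny]
    field_simp
  set ν := artanh (s / (b + x 0)) * b / s with hνdef
  have hart : artanh (s / (b + x 0)) = A / 2 := by linarith
  have hνpos : 0 < ν := by rw [hνdef, hart]; positivity
  have hlogD : logD α (toBall β x) = fun i => ν * x i.succ := by
    funext i
    simp only [logD]
    rw [hμ, hνdef]
    rw [show toBall β x i = b * x i.succ / (b + x 0) from by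
      simp only [toBall, ← hbdef]]
    field_simp
  have hlr2 : leakyRelu k (logD α (toBall β x)) = fun i => ν * w i := by
    rw [hlogD]
    funext i
    simp only [leakyRelu, hw]
    rw [show k * (ν * x i.succ) = ν * (k * x i.succ) by ring]
    exact (mul_max_of_nonneg _ _ hνpos.le).symm
  have hen2 : _root_.enorm (fun i => ν * w i) = ν * r := by
    unfold _root_.enorm
    rw [show ∑ i : Fin n, (ν * w i) ^ 2 = ν ^ 2 * R by
      rw [hRdef, Finset.mul_sum]; exact Finset.sum_congr rfl fun i _ => by ring]
    rw [show (ν ^ 2 * R : ℝ) = (ν * r) ^ 2 by rw [← hr2]; ring]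
    exact Real.sqrt_sq (mul_nonneg hνpos.le hr.le)
  have hμ2 : Real.sqrt α * _root_.enorm (fun i => ν * w i) = T / 2 := by
    rw [hsa, hen2, hνdef, hart, hTdef]
    field_simp
  have hRHS : ∀ i : Fin n, mact α k (toBall β x) i = Real.tanh (T / 2) * (b * w i / r) := by
    intro i
    simp only [mact, expD]
    rw [hlr2, hμ2]
    rw [hνdef, hart, hTdef]
    congr 1
    field_simp
  -- conclusion
  funext i
  rw [show toBall β (lact β k x) i
      = b * lact β k x i.succ / (b + lact β k x 0) from by
    simp only [toBall, ← hbdef]]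
  rw [hE0, hEs i, hRHS i]
  have htanh : Real.tanh (T / 2) = Real.sinh T / (1 + Real.cosh T) := by
    have h := tanh_half' (T / 2)
    rw [show (2 : ℝ) * (T / 2) = T by ring] at h
    exact h.symm
  rw [htanh]
  have h1 : (0 : ℝ) < 1 + Real.cosh T := by positivity
  field_simp
end
end
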